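/- The second curvature satisfies 𝔠₂ = [(EN + GL − 2FM)·V + (LN − M²)·C − E·T² − G·P² − 2(APN − BPM − ATM + BTL − PTF)] / (3·[(EG − F²)·C − E·B² + 2FAB − G·A²]). -/

import Mathlib

open Matrix

/-- With `I`, `II` the fundamental form matrices, `det I ≠ 0`,
`S = I⁻¹ * II` the shape operator and the curvatures defined by the characteristic
polynomial identity, the second curvature is given by the stated formula. -/
theorem second_curvature_formula
    (E F G A B C L M N P T V c₁ c₂ c₃ : ℝ)
    (hdet : (E * G - F ^ 2) * C - E * B ^ 2 + 2 * F * A * B - G * A ^ 2 ≠ 0)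
    (S : Matrix (Fin 3) (Fin 3) ℝ)
    (hS : S = (!![E, F, A; F, G, B; A, B, C])⁻¹ * !![L, M, P; M, N, T; P, T, V])
    (hchar : ∀ lam : ℝ,
      (S - lam • (1 : Matrix (Fin 3) (Fin 3) ℝ)).det
        = -lam ^ 3 + 3 * c₁ * lam ^ 2 - 3 * c₂ * lam + c₃) :
    c₂ = ((E * N + G * L - 2 * F * M) * V + (L * N - M ^ 2) * C - E * T ^ 2 - G * P ^ 2
          - 2 * (A * P * N - B * P * M - A * T * M + B * T * L - P * T * F))
        / (3 * ((E * G - F ^ 2) * C - E * B ^ 2 + 2 * F * A * B - G * A ^ 2)) := by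
  set I₁ : Matrix (Fin 3) (Fin 3) ℝ := !![E, F, A; F, G, B; A, B, C] with hI₁
  set II : Matrix (Fin 3) (Fin 3) ℝ := !![L, M, P; M, N, T; P, T, V] with hII
  have hdI : I₁.det = (E * G - F ^ 2) * C - E * B ^ 2 + 2 * F * A * B - G * A ^ 2 := by
    simp [hI₁, Matrix.det_fin_three]; ring
  have hIu : IsUnit I₁.det := isUnit_iff_ne_zero.2 (hdI ▸ hdet)
  have key : ∀ lam : ℝ, (S - lam • (1 : Matrix (Fin 3) (Fin 3) ℝ)).det
      = I₁.det⁻¹ * (II - lam • I₁).det := by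
    intro lam
    have h : S - lam • (1 : Matrix (Fin 3) (Fin 3) ℝ) = I₁⁻¹ * (II - lam • I₁) := by
      rw [hS, Matrix.mul_sub, Matrix.mul_smul, Matrix.nonsing_inv_mul _ hIu]
    rw [h, Matrix.det_mul, Matrix.det_nonsing_inv, Ring.inverse_eq_inv']
  have h1 := hchar 1
  have h2 := hchar (-1)
  rw [key] at h1 h2
  have hd1 : (II - (1:ℝ) • I₁).det =
      (L - E) * ((N - G) * (V - C) - (T - B) * (T - B))
      - (M - F) * ((M - F) * (V - C) - (T - B) * (P - A))
      + (P - A) * ((M - F) * (T - B) - (N - G) * (P - A)) := by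
    simp [hI₁, hII, Matrix.det_fin_three]; ring
  have hd2 : (II - (-1:ℝ) • I₁).det =
      (L + E) * ((N + G) * (V + C) - (T + B) * (T + B))
      - (M + F) * ((M + F) * (V + C) - (T + B) * (P + A))
      + (P + A) * ((M + F) * (T + B) - (N + G) * (P + A)) := by
    simp [hI₁, hII, Matrix.det_fin_three]; ring
  rw [hd1] at h1
  rw [hd2] at h2
  rw [hdI] at h1 h2
  have hne : (E * G - F ^ 2) * C - E * B ^ 2 + 2 * F * A * B - G * A ^ 2 ≠ 0 := hdet
  rw [inv_mul_eq_iff_eq_mul₀ hne] at h1 h2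
  rw [eq_div_iff (mul_ne_zero three_ne_zero hne)]
  linear_combination (h1 - h2) / 2
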